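/- In ℚG(m,1,n), define B_a for 0 ≤ a ≤ n as the sum over all ways of shuffling an arbitrary element of G(m,1,a) (as an a-deck of m-cards) into the fixed ordered deck ((a+1,1),…,(n,1)). Then B_{a+1} = (B_1 − a·m)·B_a for 0 ≤ a ≤ n−1, and hence B_a = B_1(B_1 − m)(B_1 − 2m)⋯(B_1 − (a−1)m). -/

import Mathlib

open Finset Multiplicative

/-- The cyclic group of order `m` (written multiplicatively). -/
abbrev Cm (m : ℕ) : Type := Multiplicative (ZMod m)

/-- The action of `S_n` on `(C_m)^n` permuting coordinates. -/
def wrAct (m n : ℕ) : Equiv.Perm (Fin n) →* MulAut (Fin n → Cm m) where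
  toFun σ :=
    { toFun := fun f => f ∘ σ.symm
      invFun := fun f => f ∘ σ
      left_inv := fun f => by ext i; simp
      right_inv := fun f => by ext i; simp
      map_mul' := fun f g => rfl }
  map_one' := by ext f i; rfl
  map_mul' := fun σ τ => by ext f i; rfl

/-- The wreath product `C_m ≀ S_n = (C_m)^n ⋊ S_n`, i.e. the group `G(m,1,n)`. -/
abbrev GG (m n : ℕ) := (Fin n → Cm m) ⋊[wrAct m n] Equiv.Perm (Fin n)

def ggEquiv (m n : ℕ) : GG m n ≃ (Fin n → Cm m) × Equiv.Perm (Fin n) where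
  toFun g := (g.left, g.right)
  invFun p := ⟨p.1, p.2⟩
  left_inv _ := rfl
  right_inv _ := rfl

instance (m n : ℕ) [NeZero m] : Fintype (GG m n) :=
  Fintype.ofEquiv _ (ggEquiv m n).symm

instance (m n : ℕ) : DecidableEq (GG m n) := (ggEquiv m n).decidableEq

/-- The generator `s_{i+1}` of `G(m,1,n)`: the simple transposition `(i+1, i+2)`
(0-indexed: `sGen m n i` swaps positions `i` and `i+1`). -/
def sGen (m n : ℕ) (i : ℕ) : GG m n :=
  if h : i + 1 < n then
    SemidirectProduct.inr (Equiv.swap ⟨i, Nat.lt_of_succ_lt h⟩ ⟨i + 1, h⟩) else 1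

/-- The generator `t_{i+1}` of `G(m,1,n)`, rotating the `(i+1)`-st card (0-indexed). -/
def tGen (m n : ℕ) (i : ℕ) : GG m n :=
  if h : i < n then
    SemidirectProduct.inl (Pi.mulSingle ⟨i, h⟩ (ofAdd (1 : ZMod m))) else 1

/-- `⁽ᵐ⁾Ш_{1,k-1} = (1 + s_{k-1} + s_{k-2}s_{k-1} + ⋯ + s_1⋯s_{k-1})(1 + t_k + ⋯ + t_k^{m-1})`,
viewed inside `ℤ G(m,1,n)` (case `k = n` is the 1-shuffle element of `G(m,1,n)` itself). -/
noncomputable def msha (m n k : ℕ) : MonoidAlgebra ℤ (GG m n) :=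
  (∑ l ∈ Finset.range k, MonoidAlgebra.of ℤ (GG m n)
      (((List.range l).map (fun p => sGen m n (k - 1 - l + p))).prod)) *
  (∑ a ∈ Finset.range m, MonoidAlgebra.of ℤ (GG m n) (tGen m n (k - 1) ^ a))

/-- `g ∈ G(m,1,n)` is a deck obtained by shuffling an arbitrary `a`-deck of `m`-cards into
the fixed ordered untwisted deck `((a+1,1),…,(n,1))`: every card `c ≥ a` is untwisted and
the positions of the cards `a, a+1, …, n-1` (0-indexed) in the deck appear in increasing
order.  (Position `j` of the deck of `g = (ρ,σ)` holds the card `(σ j, ρ(σ j))`, so card `c`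
has twist `ρ(c)` and sits at position `σ⁻¹ c`.) -/
def IsShuffleOfTail {m n : ℕ} (a : ℕ) (g : GG m n) : Prop :=
  (∀ c : Fin n, a ≤ (c : ℕ) → g.left c = 1) ∧
  (∀ c c' : Fin n, a ≤ (c : ℕ) → c < c' → g.right⁻¹ c < g.right⁻¹ c')

instance {m n : ℕ} (a : ℕ) (g : GG m n) : Decidable (IsShuffleOfTail a g) :=
  inferInstanceAs (Decidable (_ ∧ _))

/-- `B_a ∈ ℚ G(m,1,n)`: the sum over all ways of shuffling an arbitrary element of
`G(m,1,a)` (as an `a`-deck of `m`-cards) into the fixed deck `((a+1,1),…,(n,1))`. -/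
noncomputable def B (m n : ℕ) [NeZero m] (a : ℕ) : MonoidAlgebra ℚ (GG m n) :=
  ∑ g ∈ Finset.univ.filter (fun g : GG m n => IsShuffleOfTail a g),
    MonoidAlgebra.of ℚ (GG m n) g

section Aux

variable {m n : ℕ}

/-- The "cycle" permutation: `c ↦ c+1` for `c < p`, `p ↦ 0`, fixes `c > p`. -/
def cycPerm (p : Fin n) : Equiv.Perm (Fin n) where
  toFun c :=
    if h : (c : ℕ) < (p : ℕ) then ⟨(c : ℕ) + 1, by have := p.isLt; omega⟩
    else if (c : ℕ) = (p : ℕ) then ⟨0, p.pos⟩ else c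
  invFun c :=
    if (c : ℕ) = 0 then p
    else if h : (c : ℕ) ≤ (p : ℕ) then ⟨(c : ℕ) - 1, by have := c.isLt; omega⟩ else c
  left_inv c := by
    dsimp only
    have hc := c.isLt; have hp := p.isLt
    rcases lt_trichotomy ((c : ℕ)) ((p : ℕ)) with h | h | h
    · rw [dif_pos h]
      split_ifs <;> (try (apply Fin.ext)) <;> simp_all <;> omega
    · rw [dif_neg (by omega), if_pos h]
      split_ifs <;> (try (apply Fin.ext)) <;> simp_all <;> omega
    · rw [dif_neg (show ¬(c:ℕ) < (p:ℕ) by omega),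
        if_neg (show ¬(c:ℕ) = (p:ℕ) by omega),
        if_neg (show ¬(c:ℕ) = 0 by omega),
        dif_neg (show ¬(c:ℕ) ≤ (p:ℕ) by omega)]
  right_inv c := by
    dsimp only
    have hc := c.isLt; have hp := p.isLt
    by_cases h0 : (c : ℕ) = 0
    · rw [if_pos h0]
      split_ifs <;> (try (apply Fin.ext)) <;> simp_all <;> omega
    · by_cases h : (c : ℕ) ≤ (p : ℕ)
      · rw [if_neg h0, dif_pos h]
        split_ifs <;> (try (apply Fin.ext)) <;> simp_all <;> omega
      · rw [if_neg h0, dif_neg h]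
        split_ifs <;> (try (apply Fin.ext)) <;> simp_all <;> omega

lemma cycPerm_lt {p c : Fin n} (h : (c : ℕ) < (p : ℕ)) :
    ((cycPerm p c : Fin n) : ℕ) = (c : ℕ) + 1 := by
  simp only [cycPerm, Equiv.coe_fn_mk, dif_pos h]

lemma cycPerm_eq {p c : Fin n} (h : (c : ℕ) = (p : ℕ)) :
    ((cycPerm p c : Fin n) : ℕ) = 0 := by
  simp only [cycPerm, Equiv.coe_fn_mk, dif_neg (by omega : ¬ (c:ℕ) < (p:ℕ)), if_pos h]

lemma cycPerm_gt {p c : Fin n} (h : (p : ℕ) < (c : ℕ)) : cycPerm p c = c := by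
  simp only [cycPerm, Equiv.coe_fn_mk, dif_neg (by omega : ¬ (c:ℕ) < (p:ℕ)),
    if_neg (by omega : ¬ (c:ℕ) = (p:ℕ))]

lemma cycPerm_symm_zero {p c : Fin n} (h : (c : ℕ) = 0) : (cycPerm p).symm c = p := by
  simp only [cycPerm, Equiv.coe_fn_symm_mk, if_pos h]

lemma cycPerm_symm_le {p c : Fin n} (h0 : (c : ℕ) ≠ 0) (h : (c : ℕ) ≤ (p : ℕ)) :
    (((cycPerm p).symm c : Fin n) : ℕ) = (c : ℕ) - 1 := by
  simp only [cycPerm, Equiv.coe_fn_symm_mk, if_neg h0, dif_pos h]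

lemma cycPerm_symm_gt {p c : Fin n} (h : (p : ℕ) < (c : ℕ)) : (cycPerm p).symm c = c := by
  simp only [cycPerm, Equiv.coe_fn_symm_mk, if_neg (by omega : ¬ (c:ℕ) = 0),
    dif_neg (by omega : ¬ (c:ℕ) ≤ (p:ℕ))]



lemma gg_inv_mul_left {m n : ℕ} (h π : GG m n) (c : Fin n) :
    (h⁻¹ * π).left c = (h.left (h.right c))⁻¹ * π.left (h.right c) := rfl

lemma gg_inv_mul_rightinv {m n : ℕ} (h π : GG m n) (c : Fin n) :
    (h⁻¹ * π).right⁻¹ c = π.right⁻¹ (h.right c) := by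
  simp [SemidirectProduct.mul_right, mul_inv_rev, Equiv.Perm.mul_apply]

/-- The element of the wreath product putting card `0` (with twist `t`) at position `p`. -/
def Hmap {m n : ℕ} (p : Fin n) (t : Cm m) : GG m n :=
  ⟨Pi.mulSingle ⟨0, p.pos⟩ t, cycPerm p⟩

lemma Hmap_left {m n : ℕ} (p : Fin n) (t : Cm m) :
    (Hmap p t).left = Pi.mulSingle (⟨0, p.pos⟩ : Fin n) t := rfl

lemma Hmap_right {m n : ℕ} (p : Fin n) (t : Cm m) : (Hmap p t).right = cycPerm p := rfl

lemma Hmap_mem {m n : ℕ} (p : Fin n) (t : Cm m) : IsShuffleOfTail 1 (Hmap p t) := by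
  constructor
  · intro c hc
    rw [Hmap_left, Pi.mulSingle_apply, if_neg (fun e => by rw [e] at hc; simp at hc)]
  · intro c c' hc hlt
    rw [Hmap_right]
    show (cycPerm p)⁻¹ c < (cycPerm p)⁻¹ c'
    have hlt' : (c : ℕ) < (c' : ℕ) := hlt
    rw [show ((cycPerm p)⁻¹ : Equiv.Perm (Fin n)) = (cycPerm p).symm from rfl]
    rw [Fin.lt_def]
    by_cases h1 : (c : ℕ) ≤ (p : ℕ)
    · rw [cycPerm_symm_le (by omega) h1]
      by_cases h2 : (c' : ℕ) ≤ (p : ℕ)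
      · rw [cycPerm_symm_le (by omega) h2]; omega
      · rw [cycPerm_symm_gt (by omega)]; omega
    · rw [cycPerm_symm_gt (by omega), cycPerm_symm_gt (by omega)]; omega

lemma Hmap_rightinv_zero {m n : ℕ} (hn : 0 < n) (p : Fin n) (t : Cm m) :
    (Hmap p t).right⁻¹ ⟨0, hn⟩ = p := by
  rw [Hmap_right]
  show (cycPerm p).symm _ = p
  exact cycPerm_symm_zero rfl

lemma Hmap_left_zero {m n : ℕ} (hn : 0 < n) (p : Fin n) (t : Cm m) :
    (Hmap p t).left ⟨0, hn⟩ = t := by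
  rw [Hmap_left]; simp

/-- Injective functions on `Fin n` agreeing at `0` and strictly monotone away from `0`
are equal. -/
lemma fun_unique {n : ℕ} {f g : Fin n → Fin n}
    (hfi : Function.Injective f) (hgi : Function.Injective g)
    (h0 : ∀ c : Fin n, (c : ℕ) = 0 → f c = g c)
    (hf : ∀ c c' : Fin n, 1 ≤ (c : ℕ) → c < c' → f c < f c')
    (hg : ∀ c c' : Fin n, 1 ≤ (c : ℕ) → c < c' → g c < g c') : f = g := by
  cases n with
  | zero => funext c; exact absurd c.isLt (by omega)
  | succ n' =>
    have hfs : Function.Surjective f := Finite.surjective_of_injective hfi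
    have hgs : Function.Surjective g := Finite.surjective_of_injective hgi
    set f' : Fin n' → Fin (n' + 1) := fun i => f i.succ with hf'
    set g' : Fin n' → Fin (n' + 1) := fun i => g i.succ with hg'
    have hfm : StrictMono f' := fun i j hij =>
      hf i.succ j.succ (by rw [Fin.val_succ]; omega) (Fin.succ_lt_succ_iff.mpr hij)
    have hgm : StrictMono g' := fun i j hij =>
      hg i.succ j.succ (by rw [Fin.val_succ]; omega) (Fin.succ_lt_succ_iff.mpr hij)
    have hz : f 0 = g 0 := h0 0 rfl
    have hr : Set.range f' = Set.range g' := by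
      have hrf : Set.range f' = {f 0}ᶜ := by
        ext y; simp only [Set.mem_range, Set.mem_compl_iff, Set.mem_singleton_iff]
        constructor
        · rintro ⟨i, rfl⟩ e
          exact absurd (hfi e) (Fin.succ_ne_zero i)
        · intro hy
          obtain ⟨x, rfl⟩ := hfs y
          have hx : x ≠ 0 := fun e => hy (by rw [e])
          obtain ⟨i, rfl⟩ := Fin.eq_succ_of_ne_zero hx
          exact ⟨i, rfl⟩
      have hrg : Set.range g' = {g 0}ᶜ := by
        ext y; simp only [Set.mem_range, Set.mem_compl_iff, Set.mem_singleton_iff]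
        constructor
        · rintro ⟨i, rfl⟩ e
          exact absurd (hgi e) (Fin.succ_ne_zero i)
        · intro hy
          obtain ⟨x, rfl⟩ := hgs y
          have hx : x ≠ 0 := fun e => hy (by rw [e])
          obtain ⟨i, rfl⟩ := Fin.eq_succ_of_ne_zero hx
          exact ⟨i, rfl⟩
      rw [hrf, hrg, hz]
    haveI : WellFoundedLT (Fin n') := Finite.to_wellFoundedLT
    have : f' = g' := (hfm.range_inj hgm).mp hr
    funext c
    rcases Fin.eq_zero_or_eq_succ c with rfl | ⟨i, rfl⟩
    · exact hz
    · exact congrFun this i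

lemma eq_Hmap {m n : ℕ} (hn : 0 < n) {h : GG m n} (hh : IsShuffleOfTail 1 h) :
    h = Hmap (h.right⁻¹ ⟨0, hn⟩) (h.left ⟨0, hn⟩) := by
  set p := h.right⁻¹ ⟨0, hn⟩
  set t := h.left ⟨0, hn⟩
  have hright : h.right = cycPerm p := by
    have key : (fun c => h.right⁻¹ c) = (fun c => (cycPerm p).symm c) := by
      apply fun_unique
      · exact fun x y e => (h.right⁻¹).injective e
      · exact fun x y e => (cycPerm p).symm.injective e
      · intro c hc
        have : c = ⟨0, hn⟩ := Fin.ext hc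
        rw [this]
        exact (cycPerm_symm_zero (c := (⟨0, hn⟩ : Fin n)) rfl).symm
      · exact fun c c' hc hlt => hh.2 c c' hc hlt
      · intro c c' hc hlt
        have := (Hmap_mem (m := m) p t).2 c c' hc hlt
        rw [Hmap_right] at this
        exact this
    have : h.right⁻¹ = (cycPerm p)⁻¹ := Equiv.ext fun c => congrFun key c
    exact inv_injective this
  have hleft : h.left = Pi.mulSingle (⟨0, p.pos⟩ : Fin n) t := by
    funext c
    by_cases hc : (c : ℕ) = 0
    · have : c = ⟨0, hn⟩ := Fin.ext hc
      rw [this]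
      simp [t, show (⟨0, hn⟩ : Fin n) = ⟨0, p.pos⟩ from rfl]
    · rw [hh.1 c (by omega), Pi.mulSingle_apply, if_neg (fun e => hc (by rw [e]))]
  exact SemidirectProduct.ext hleft hright

lemma mono_of_adj {n b : ℕ} {f : Fin n → Fin n}
    (h : ∀ (k : ℕ) (h1 : k + 1 < n), b ≤ k → f ⟨k, by omega⟩ < f ⟨k + 1, h1⟩) :
    ∀ c c' : Fin n, b ≤ (c : ℕ) → c < c' → f c < f c' := by
  have key : ∀ (k : ℕ) (hk : k < n) (c : Fin n), b ≤ (c : ℕ) → (c : ℕ) < k →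
      f c < f ⟨k, hk⟩ := by
    intro k
    induction k with
    | zero => intro hk c hb hc; omega
    | succ k ih =>
      intro hk c hb hc
      rcases Nat.lt_or_ge (c : ℕ) k with h' | h'
      · exact lt_trans (ih (by omega) c hb h') (h k hk (by omega))
      · have : c = ⟨k, by omega⟩ := Fin.ext (show (c : ℕ) = k by omega)
        rw [this]
        exact h k hk (by omega)
  intro c c' hb hlt
  have := key (c' : ℕ) c'.isLt c hb hlt
  simpa using this

lemma low_case {m n : ℕ} [NeZero m] {a : ℕ} {p : Fin n} {t : Cm m} (π : GG m n)
    (hp : (p : ℕ) < a) :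
    IsShuffleOfTail a ((Hmap p t)⁻¹ * π) ↔ IsShuffleOfTail a π := by
  have e2 : ∀ c : Fin n, a ≤ (c : ℕ) → (Hmap p t).right c = c := fun c hc => by
    rw [Hmap_right]; exact cycPerm_gt (by omega)
  have el : ∀ c : Fin n, a ≤ (c : ℕ) → ((Hmap p t)⁻¹ * π).left c = π.left c := by
    intro c hc
    rw [gg_inv_mul_left, e2 c hc, Hmap_left,
      Pi.mulSingle_apply, if_neg (fun e => by rw [e] at hc; simp at hc; omega)]
    simp
  have er : ∀ c : Fin n, a ≤ (c : ℕ) → ((Hmap p t)⁻¹ * π).right⁻¹ c = π.right⁻¹ c := by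
    intro c hc; rw [gg_inv_mul_rightinv, e2 c hc]
  constructor
  · rintro ⟨h1, h2⟩
    refine ⟨fun c hc => by rw [← el c hc]; exact h1 c hc, fun c c' hc hlt => ?_⟩
    have hcc : (c : ℕ) < (c' : ℕ) := hlt
    rw [← er c hc, ← er c' (by omega)]
    exact h2 c c' hc hlt
  · rintro ⟨h1, h2⟩
    refine ⟨fun c hc => by rw [el c hc]; exact h1 c hc, fun c c' hc hlt => ?_⟩
    have hcc : (c : ℕ) < (c' : ℕ) := hlt
    rw [er c hc, er c' (by omega)]
    exact h2 c c' hc hlt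

lemma high_case {m n : ℕ} [NeZero m] {a : ℕ} {p : Fin n} {t : Cm m} (π : GG m n)
    (hn : 0 < n) (hp : a ≤ (p : ℕ)) :
    IsShuffleOfTail a ((Hmap p t)⁻¹ * π) ↔
      (IsShuffleOfTail (a + 1) π ∧ t = π.left ⟨0, hn⟩ ∧
        ((a < (p : ℕ) → π.right⁻¹ p < π.right⁻¹ ⟨0, hn⟩) ∧
         (∀ h1 : (p : ℕ) + 1 < n, π.right⁻¹ ⟨0, hn⟩ < π.right⁻¹ ⟨(p : ℕ) + 1, h1⟩))) := by
  set σ := cycPerm p with hσ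
  have hz : (⟨0, p.pos⟩ : Fin n) = ⟨0, hn⟩ := rfl
  have fσp : σ p = ⟨0, hn⟩ := Fin.ext (cycPerm_eq rfl)
  constructor
  · rintro ⟨hL, hR⟩
    have hL' : ∀ c : Fin n, a ≤ (c : ℕ) →
        π.left (σ c) = (Pi.mulSingle (⟨0, hn⟩ : Fin n) t : Fin n → Cm m) (σ c) := by
      intro c hc
      have := hL c hc
      rw [gg_inv_mul_left] at this
      rw [Hmap_right, Hmap_left, hz] at this
      exact (inv_mul_eq_one.mp this).symm
    have hR' : ∀ c c' : Fin n, a ≤ (c : ℕ) → c < c' →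
        π.right⁻¹ (σ c) < π.right⁻¹ (σ c') := by
      intro c c' hc hlt
      have := hR c c' hc hlt
      rwa [gg_inv_mul_rightinv, gg_inv_mul_rightinv, Hmap_right] at this
    have hsymm : ∀ c : Fin n, a + 1 ≤ (c : ℕ) →
        a ≤ ((σ.symm c : Fin n) : ℕ) ∧ σ (σ.symm c) = c := by
      intro c hc
      refine ⟨?_, σ.apply_symm_apply c⟩
      by_cases h1 : (c : ℕ) ≤ (p : ℕ)
      · rw [hσ, cycPerm_symm_le (by omega) h1]; omega
      · rw [hσ, cycPerm_symm_gt (by omega)]; omega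
    refine ⟨⟨?_, ?_⟩, ?_, ?_, ?_⟩
    · intro c hc
      obtain ⟨hd, hde⟩ := hsymm c hc
      have := hL' _ hd
      rw [hde] at this
      rw [this, Pi.mulSingle_apply, if_neg (fun e => by rw [e] at hc; simp at hc)]
    · intro c c' hc hlt
      obtain ⟨hd, hde⟩ := hsymm c hc
      have hcc : (c : ℕ) < (c' : ℕ) := hlt
      obtain ⟨hd', hde'⟩ := hsymm c' (by omega)
      have hlt2 : σ.symm c < σ.symm c' := by
        rw [Fin.lt_def, hσ]
        by_cases h1 : (c : ℕ) ≤ (p : ℕ)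
        · rw [cycPerm_symm_le (by omega) h1]
          by_cases h2 : (c' : ℕ) ≤ (p : ℕ)
          · rw [cycPerm_symm_le (by omega) h2]; omega
          · rw [cycPerm_symm_gt (by omega)]; omega
        · rw [cycPerm_symm_gt (show (p:ℕ) < (c:ℕ) by omega),
            cycPerm_symm_gt (show (p:ℕ) < (c':ℕ) by omega)]; omega
      have := hR' _ _ hd hlt2
      rwa [hde, hde'] at this
    · have := hL' p hp
      rw [fσp, Pi.mulSingle_eq_same] at this
      exact this.symm
    · intro hap
      have hd : σ ⟨(p : ℕ) - 1, by omega⟩ = p :=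
        Fin.ext (by rw [hσ, cycPerm_lt (by simp; omega)]; simp; omega)
      have := hR' ⟨(p : ℕ) - 1, by omega⟩ p (by simp; omega) (by rw [Fin.lt_def]; simp; omega)
      rwa [hd, fσp] at this
    · intro h1
      have hd : σ ⟨(p : ℕ) + 1, h1⟩ = ⟨(p : ℕ) + 1, h1⟩ := by
        rw [hσ]; exact cycPerm_gt (by simp)
      have := hR' p ⟨(p : ℕ) + 1, h1⟩ hp (by rw [Fin.lt_def]; simp)
      rwa [hd, fσp] at this
  · rintro ⟨⟨hT, hM⟩, ht, hC1, hC2⟩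
    constructor
    · intro c hc
      rw [gg_inv_mul_left, Hmap_right, Hmap_left, hz]
      rw [inv_mul_eq_one]
      rcases lt_trichotomy ((c : ℕ)) ((p : ℕ)) with h' | h' | h'
      · have hv : ((σ c : Fin n) : ℕ) = (c : ℕ) + 1 := cycPerm_lt h'
        rw [Pi.mulSingle_apply, if_neg (fun e => by rw [e] at hv; simp at hv),
          hT (σ c) (by omega)]
      · have : c = p := Fin.ext h'
        rw [this, fσp, Pi.mulSingle_eq_same, ht]
      · have hv : σ c = c := cycPerm_gt h'
        rw [hv, Pi.mulSingle_apply, if_neg (fun e => by rw [e] at h'; simp at h'),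
          hT c (by omega)]
    · apply mono_of_adj
      intro k h1 hk
      rw [gg_inv_mul_rightinv, gg_inv_mul_rightinv, Hmap_right]
      rcases lt_trichotomy (k + 1) ((p : ℕ)) with h' | h' | h'
      · have e1 : σ ⟨k, by omega⟩ = ⟨k + 1, by omega⟩ :=
          Fin.ext (by rw [hσ, cycPerm_lt (by simp; omega)])
        have e2 : σ ⟨k + 1, h1⟩ = ⟨k + 2, by omega⟩ :=
          Fin.ext (by rw [hσ, cycPerm_lt (by simp; omega)])
        rw [e1, e2]
        exact hM _ _ (by simp; omega) (by rw [Fin.lt_def]; simp)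
      · have e1 : σ ⟨k, by omega⟩ = p :=
          Fin.ext (by rw [hσ, cycPerm_lt (by simp; omega)]; simp; omega)
        have e2 : σ ⟨k + 1, h1⟩ = ⟨0, hn⟩ := by
          have : (⟨k + 1, h1⟩ : Fin n) = p := Fin.ext (by simp; omega)
          rw [this, fσp]
        rw [e1, e2]
        exact hC1 (by omega)
      · rcases Nat.lt_or_ge ((p : ℕ)) k with h'' | h''
        · have e1 : σ ⟨k, by omega⟩ = ⟨k, by omega⟩ := by
            rw [hσ]; exact cycPerm_gt (by simp; omega)
          have e2 : σ ⟨k + 1, h1⟩ = ⟨k + 1, h1⟩ := by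
            rw [hσ]; exact cycPerm_gt (by simp; omega)
          rw [e1, e2]
          exact hM _ _ (by simp; omega) (by rw [Fin.lt_def]; simp)
        · have hkp : k = (p : ℕ) := by omega
          have e1 : σ ⟨k, by omega⟩ = ⟨0, hn⟩ := by
            have : (⟨k, by omega⟩ : Fin n) = p := Fin.ext (by simp; omega)
            rw [this, fσp]
          have e2 : σ ⟨k + 1, h1⟩ = ⟨k + 1, h1⟩ := by
            rw [hσ]; exact cycPerm_gt (by simp; omega)
          rw [e1, e2]
          have := hC2 (by omega)
          have ee : (⟨(p : ℕ) + 1, by omega⟩ : Fin n) = ⟨k + 1, h1⟩ := Fin.ext (by simp; omega)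
          rwa [ee] at this

lemma insert_unique {n a : ℕ} (ha : a < n) (q : Fin n → Fin n) (hq : Function.Injective q)
    (hM : ∀ c c' : Fin n, a + 1 ≤ (c : ℕ) → c < c' → q c < q c') :
    ∃! p : Fin n, a ≤ (p : ℕ) ∧
      ((a < (p : ℕ) → q p < q ⟨0, by omega⟩) ∧
       (∀ h1 : (p : ℕ) + 1 < n, q ⟨0, by omega⟩ < q ⟨(p : ℕ) + 1, h1⟩)) := by
  have hn : 0 < n := by omega
  set P : Fin n → Prop := fun p => a ≤ (p : ℕ) ∧
      ((a < (p : ℕ) → q p < q ⟨0, hn⟩) ∧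
       (∀ h1 : (p : ℕ) + 1 < n, q ⟨0, hn⟩ < q ⟨(p : ℕ) + 1, h1⟩)) with hP
  have uniq : ∀ p₁ p₂ : Fin n, P p₁ → P p₂ → (p₁ : ℕ) < (p₂ : ℕ) → False := by
    intro p₁ p₂ h₁ h₂ hlt
    have ha2 : a < (p₂ : ℕ) := by omega
    have hq2 : q p₂ < q ⟨0, hn⟩ := h₂.2.1 ha2
    have hp1n : (p₁ : ℕ) + 1 < n := by have := p₂.isLt; omega
    have hq1 : q ⟨0, hn⟩ < q ⟨(p₁ : ℕ) + 1, hp1n⟩ := h₁.2.2 hp1n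
    have hle : q ⟨(p₁ : ℕ) + 1, hp1n⟩ ≤ q p₂ := by
      rcases Nat.lt_or_ge ((p₁ : ℕ) + 1) ((p₂ : ℕ)) with h' | h'
      · exact le_of_lt (hM _ _ (by simp; omega) (by rw [Fin.lt_def]; simp; omega))
      · have : (⟨(p₁ : ℕ) + 1, hp1n⟩ : Fin n) = p₂ := Fin.ext (by simp; omega)
        rw [this]
    exact lt_irrefl _ (lt_trans hq1 (lt_of_le_of_lt hle hq2))
  set S : Finset (Fin n) :=
    Finset.univ.filter (fun c : Fin n => a + 1 ≤ (c : ℕ) ∧ q c < q ⟨0, hn⟩) with hS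
  have exP : ∃ p : Fin n, P p := by
    by_cases hSne : S.Nonempty
    · have hpS := Finset.mem_filter.mp (S.max'_mem hSne)
      refine ⟨S.max' hSne, by omega, fun _ => hpS.2.2, fun h1 => ?_⟩
      have hnotS : (⟨((S.max' hSne : Fin n) : ℕ) + 1, h1⟩ : Fin n) ∉ S := by
        intro hmem
        have := Fin.le_def.mp (S.le_max' _ hmem)
        simp at this
      have h2 : ¬ (a + 1 ≤ ((⟨((S.max' hSne : Fin n) : ℕ) + 1, h1⟩ : Fin n) : ℕ) ∧
          q ⟨((S.max' hSne : Fin n) : ℕ) + 1, h1⟩ < q ⟨0, hn⟩) := fun hc =>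
        hnotS (Finset.mem_filter.mpr ⟨Finset.mem_univ _, hc⟩)
      have hne : q ⟨((S.max' hSne : Fin n) : ℕ) + 1, h1⟩ ≠ q ⟨0, hn⟩ := fun e => by
        have := hq e
        rw [Fin.ext_iff] at this
        simp at this
      have hge : ¬ q ⟨((S.max' hSne : Fin n) : ℕ) + 1, h1⟩ < q ⟨0, hn⟩ := fun hlt =>
        h2 ⟨by simp; omega, hlt⟩
      exact lt_of_le_of_ne (not_lt.mp hge) (Ne.symm hne)
    · refine ⟨⟨a, ha⟩, by simp, fun h' => absurd h' (by simp), fun h1 => ?_⟩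
      have hnotS : (⟨a + 1, h1⟩ : Fin n) ∉ S := fun hmem => hSne ⟨_, hmem⟩
      have h2 : ¬ (a + 1 ≤ ((⟨a + 1, h1⟩ : Fin n) : ℕ) ∧ q ⟨a + 1, h1⟩ < q ⟨0, hn⟩) :=
        fun hc => hnotS (Finset.mem_filter.mpr ⟨Finset.mem_univ _, hc⟩)
      have hne : q ⟨a + 1, h1⟩ ≠ q ⟨0, hn⟩ := fun e => by
        have := hq e
        rw [Fin.ext_iff] at this
        simp at this
      have hge : ¬ q ⟨a + 1, h1⟩ < q ⟨0, hn⟩ := fun hlt => h2 ⟨by simp, hlt⟩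
      exact lt_of_le_of_ne (not_lt.mp hge) (Ne.symm hne)
  obtain ⟨p, hp⟩ := exP
  refine ⟨p, hp, fun y hy => ?_⟩
  rcases lt_trichotomy ((y : ℕ)) ((p : ℕ)) with h' | h' | h'
  · exact absurd (uniq y p hy hp h') id
  · exact Fin.ext h'
  · exact absurd (uniq p y hp hy h') id

lemma count_key {m n : ℕ} [NeZero m] (a : ℕ) (ha : a < n) (π : GG m n) :
    (Finset.univ.filter fun h : GG m n =>
        IsShuffleOfTail 1 h ∧ IsShuffleOfTail a (h⁻¹ * π)).card
      = (if IsShuffleOfTail (a + 1) π then 1 else 0)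
        + a * m * (if IsShuffleOfTail a π then 1 else 0) := by
  classical
  have hn : 0 < n := by omega
  have step1 : (Finset.univ.filter fun h : GG m n =>
        IsShuffleOfTail 1 h ∧ IsShuffleOfTail a (h⁻¹ * π)).card
      = (Finset.univ.filter fun pt : Fin n × Cm m =>
        IsShuffleOfTail a ((Hmap pt.1 pt.2)⁻¹ * π)).card := by
    apply Finset.card_bij' (i := fun (h : GG m n) _ => (h.right⁻¹ ⟨0, hn⟩, h.left ⟨0, hn⟩))
      (j := fun (pt : Fin n × Cm m) _ => Hmap pt.1 pt.2)
    · intro h hmem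
      rw [Finset.mem_filter] at hmem ⊢
      obtain ⟨_, h1, h2⟩ := hmem
      exact ⟨Finset.mem_univ _, by rw [← eq_Hmap hn h1]; exact h2⟩
    · intro pt hmem
      rw [Finset.mem_filter] at hmem ⊢
      exact ⟨Finset.mem_univ _, Hmap_mem _ _, hmem.2⟩
    · intro h hmem
      rw [Finset.mem_filter] at hmem
      exact (eq_Hmap hn hmem.2.1).symm
    · intro pt _
      exact Prod.ext (Hmap_rightinv_zero hn pt.1 pt.2) (Hmap_left_zero hn pt.1 pt.2)
  rw [step1]
  rw [← Finset.card_filter_add_card_filter_not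
    (s := Finset.univ.filter fun pt : Fin n × Cm m =>
      IsShuffleOfTail a ((Hmap pt.1 pt.2)⁻¹ * π))
    (p := fun pt => (pt.1 : ℕ) < a)]
  have lowcard : ((Finset.univ.filter fun pt : Fin n × Cm m =>
        IsShuffleOfTail a ((Hmap pt.1 pt.2)⁻¹ * π)).filter
          fun pt => (pt.1 : ℕ) < a).card
      = a * m * (if IsShuffleOfTail a π then 1 else 0) := by
    by_cases hFa : IsShuffleOfTail a π
    · rw [if_pos hFa, mul_one]
      have hsets : ((Finset.univ.filter fun pt : Fin n × Cm m =>
            IsShuffleOfTail a ((Hmap pt.1 pt.2)⁻¹ * π)).filter fun pt => (pt.1 : ℕ) < a)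
          = (Finset.univ.filter fun p : Fin n => (p : ℕ) < a) ×ˢ Finset.univ := by
        ext pt
        simp only [Finset.mem_filter, Finset.mem_univ, true_and, Finset.mem_product,
          and_true]
        constructor
        · exact fun h => h.2
        · exact fun h => ⟨(low_case π h).mpr hFa, h⟩
      rw [hsets, Finset.card_product]
      have c1 : (Finset.univ.filter fun p : Fin n => (p : ℕ) < a).card = a := by
        have : (Finset.univ.filter fun p : Fin n => (p : ℕ) < a)
            = Finset.map (Fin.castLEEmb (le_of_lt ha)) Finset.univ := by
          ext c
          simp only [Finset.mem_filter, Finset.mem_univ, true_and, Finset.mem_map]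
          constructor
          · intro hc
            exact ⟨⟨(c : ℕ), hc⟩, Fin.ext rfl⟩
          · rintro ⟨x, _, rfl⟩
            simpa using x.isLt
        rw [this, Finset.card_map, Finset.card_univ, Fintype.card_fin]
      have c2 : (Finset.univ : Finset (Cm m)).card = m := by
        rw [Finset.card_univ]
        simp [Cm, ZMod.card]
      rw [c1, c2]
    · rw [if_neg hFa, mul_zero]
      rw [Finset.card_eq_zero, Finset.filter_eq_empty_iff]
      intro pt hmem
      rw [Finset.mem_filter] at hmem
      intro hlt
      exact hFa ((low_case π hlt).mp hmem.2)
  have highcard : ((Finset.univ.filter fun pt : Fin n × Cm m =>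
        IsShuffleOfTail a ((Hmap pt.1 pt.2)⁻¹ * π)).filter
          fun pt => ¬ (pt.1 : ℕ) < a).card
      = (if IsShuffleOfTail (a + 1) π then 1 else 0) := by
    by_cases hF : IsShuffleOfTail (a + 1) π
    · rw [if_pos hF]
      obtain ⟨p₀, hp₀, huniq⟩ := insert_unique ha (fun c => π.right⁻¹ c)
        (fun x y e => (π.right⁻¹).injective e) hF.2
      rw [Finset.card_eq_one]
      refine ⟨(p₀, π.left ⟨0, hn⟩), ?_⟩
      ext pt
      simp only [Finset.mem_filter, Finset.mem_univ, true_and, Finset.mem_singleton]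
      constructor
      · rintro ⟨hcond, hge⟩
        have hp : a ≤ (pt.1 : ℕ) := by omega
        obtain ⟨hF', ht, hC⟩ := (high_case π hn hp).mp hcond
        exact Prod.ext (huniq pt.1 ⟨hp, hC⟩) (by rw [ht])
      · rintro rfl
        exact ⟨(high_case π hn hp₀.1).mpr ⟨hF, rfl, hp₀.2⟩, not_lt.mpr hp₀.1⟩
    · rw [if_neg hF]
      rw [Finset.card_eq_zero, Finset.filter_eq_empty_iff]
      intro pt hmem
      rw [Finset.mem_filter] at hmem
      intro hge
      exact hF ((high_case π hn (by omega)).mp hmem.2).1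
  rw [lowcard, highcard]
  ring

lemma B_apply {m n : ℕ} [NeZero m] (a : ℕ) (g : GG m n) :
    (B m n a).coeff g = if IsShuffleOfTail a g then 1 else 0 := by
  classical
  rw [B, MonoidAlgebra.coeff_sum, Finset.sum_apply']
  simp only [MonoidAlgebra.of_apply, MonoidAlgebra.coeff_single, Finsupp.single_apply]
  rw [Finset.sum_ite_eq' _ g (fun _ => (1 : ℚ))]
  simp [Finset.mem_filter]

lemma B_zero {m n : ℕ} [NeZero m] : B m n 0 = 1 := by
  classical
  have hset : (Finset.univ.filter fun g : GG m n => IsShuffleOfTail 0 g) = {1} := by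
    ext g
    simp only [Finset.mem_filter, Finset.mem_univ, true_and, Finset.mem_singleton]
    constructor
    · rintro ⟨h1, h2⟩
      have hmono : StrictMono (fun c => g.right⁻¹ c) := fun c c' h => h2 c c' (Nat.zero_le _) h
      haveI : WellFoundedLT (Fin n) := Finite.to_wellFoundedLT
      have hrange : Set.range (fun c => g.right⁻¹ c) = Set.range (fun c : Fin n => c) := by
        rw [Set.range_id']
        exact Equiv.range_eq_univ _
      have hfun : (fun c => g.right⁻¹ c) = (fun c : Fin n => c) :=
        (hmono.range_inj strictMono_id).mp hrange
      have hr1 : g.right⁻¹ = 1 := Equiv.ext fun c => congrFun hfun c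
      have hr : g.right = 1 := inv_eq_one.mp hr1
      have hl : g.left = 1 := funext fun c => h1 c (Nat.zero_le _)
      exact SemidirectProduct.ext hl (by rw [hr]; rfl)
    · rintro rfl
      exact ⟨fun c _ => rfl, fun c c' _ h => by simpa using h⟩
  rw [B, hset, Finset.sum_singleton]
  exact map_one _

lemma key_mul {m n : ℕ} [NeZero m] (a : ℕ) (ha : a < n) :
    B m n 1 * B m n a
      = B m n (a + 1) + ((a * m : ℕ) : MonoidAlgebra ℚ (GG m n)) * B m n a := by
  classical
  apply MonoidAlgebra.coeff_injective
  apply Finsupp.ext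
  intro π
  have lhs : (B m n 1 * B m n a).coeff π
      = ((Finset.univ.filter fun h : GG m n =>
          IsShuffleOfTail 1 h ∧ IsShuffleOfTail a (h⁻¹ * π)).card : ℚ) := by
    conv_lhs => rw [B]
    rw [Finset.sum_mul, MonoidAlgebra.coeff_sum, Finset.sum_apply']
    have : ∀ h ∈ (Finset.univ.filter fun g : GG m n => IsShuffleOfTail 1 g),
        (MonoidAlgebra.of ℚ (GG m n) h * B m n a).coeff π
          = if IsShuffleOfTail a (h⁻¹ * π) then (1 : ℚ) else 0 := by
      intro h _
      rw [MonoidAlgebra.of_apply, MonoidAlgebra.coeff_single_mul_apply, one_mul, B_apply]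
    rw [Finset.sum_congr rfl this, Finset.sum_boole, Finset.filter_filter]
  have rhs1 : (B m n (a + 1)).coeff π = if IsShuffleOfTail (a + 1) π then (1 : ℚ) else 0 :=
    B_apply _ _
  have rhs2 : (((a * m : ℕ) : MonoidAlgebra ℚ (GG m n)) * B m n a).coeff π
      = ((a * m : ℕ) : ℚ) * (if IsShuffleOfTail a π then (1 : ℚ) else 0) := by
    rw [MonoidAlgebra.natCast_def, MonoidAlgebra.coeff_single_mul_apply, inv_one, one_mul, B_apply]
  rw [MonoidAlgebra.coeff_add, Finsupp.add_apply, lhs, rhs1, rhs2, count_key a ha π]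
  push_cast
  ring

theorem B_recurrence_aux (m n : ℕ) [NeZero m] :
    (∀ a : ℕ, a ≤ n - 1 →
      B m n (a + 1) = (B m n 1 - ((a * m : ℕ) : MonoidAlgebra ℚ (GG m n))) * B m n a) ∧
    (∀ a : ℕ, a ≤ n →
      B m n a = (((List.range a).map
        (fun j => B m n 1 - ((j * m : ℕ) : MonoidAlgebra ℚ (GG m n)))).prod)) := by
  have part1 : ∀ a : ℕ, a ≤ n - 1 →
      B m n (a + 1) = (B m n 1 - ((a * m : ℕ) : MonoidAlgebra ℚ (GG m n))) * B m n a := by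
    intro a hale
    by_cases hn0 : n = 0
    · subst hn0
      have ha0 : a = 0 := by omega
      subst ha0
      rw [B_zero, mul_one, Nat.zero_mul, Nat.cast_zero, sub_zero]
    · have ha : a < n := by omega
      rw [sub_mul]
      exact eq_sub_of_add_eq (key_mul a ha).symm
  refine ⟨part1, ?_⟩
  intro a
  induction a with
  | zero => intro _; simpa using B_zero
  | succ a ih =>
    intro h
    rw [part1 a (by omega), ih (by omega), List.range_succ, List.map_append,
      List.prod_append, List.map_singleton, List.prod_singleton]
    refine ((Commute.list_prod_right _ _ fun y hy => ?_).eq)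
    obtain ⟨j, _, rfl⟩ := List.mem_map.mp hy
    refine Commute.sub_left (Commute.sub_right (Commute.refl _) ?_) ?_
    · exact (Nat.cast_commute (j * m) (B m n 1)).symm
    · exact Nat.cast_commute (a * m) _

/-- `B_{a+1} = (B_1 − a·m)·B_a` for `0 ≤ a ≤ n−1`, and hence
`B_a = B_1(B_1 − m)(B_1 − 2m)⋯(B_1 − (a−1)m)` for `0 ≤ a ≤ n`. -/
theorem B_recurrence (m n : ℕ) [NeZero m] :
    (∀ a : ℕ, a ≤ n - 1 →
      B m n (a + 1) = (B m n 1 - ((a * m : ℕ) : MonoidAlgebra ℚ (GG m n))) * B m n a) ∧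
    (∀ a : ℕ, a ≤ n →
      B m n a = (((List.range a).map
        (fun j => B m n 1 - ((j * m : ℕ) : MonoidAlgebra ℚ (GG m n)))).prod)) := by
  exact B_recurrence_aux m n
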